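/- Let n ≥ 1 and let w be a word of length n over the alphabet {a,b,c}. Then w lies in the image φ(N_n) if and only if w has the form w = a^i c u a c^j, where i, j ≥ 0 and u is a (possibly empty) word over {a,b,c}. -/

import Mathlib

/-- The one-line notation of a permutation `π` of `{1,…,n}`, read as a function on 0-based
positions: `permWord π j = π_{j+1}` (values are 1-based; out-of-range positions give `0`). -/
def permWord {n : ℕ} (π : Equiv.Perm (Fin n)) (j : ℕ) : ℕ :=
  if h : j < n then ((π ⟨j, h⟩ : Fin n) : ℕ) + 1 else 0

/-- `π` contains `σ` as a consecutive pattern: some window of consecutive letters of `π`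
has standardization `σ`, i.e. is order-isomorphic to the one-line word of `σ`. -/
def ContainsPat {n m : ℕ} (π : Equiv.Perm (Fin n)) (σ : Equiv.Perm (Fin m)) : Prop :=
  ∃ i : ℕ, i + m ≤ n ∧ ∀ j k : Fin m,
    (permWord π (i + (j : ℕ)) < permWord π (i + (k : ℕ)) ↔ permWord σ j < permWord σ k)

/-- The number of peaks of `π`: 1-based indices `i` with `2 ≤ i ≤ n-1` and
`π_{i-1} < π_i > π_{i+1}`. -/
def pkCount {n : ℕ} (π : Equiv.Perm (Fin n)) : ℕ :=
  ((Finset.Icc 2 (n - 1)).filter fun i =>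
    permWord π (i - 2) < permWord π (i - 1) ∧ permWord π i < permWord π (i - 1)).card

/-- The number of left peaks of `π`: 1-based indices `i ∈ [n-1]` that are peaks,
or `i = 1` with `π_1 > π_2`. -/
def lpkCount {n : ℕ} (π : Equiv.Perm (Fin n)) : ℕ :=
  ((Finset.Icc 1 (n - 1)).filter fun i =>
    (2 ≤ i ∧ permWord π (i - 2) < permWord π (i - 1) ∧ permWord π i < permWord π (i - 1))
      ∨ (i = 1 ∧ permWord π 1 < permWord π 0)).card

/-- The number of peaks of `π⁻¹`. -/
def ipk {n : ℕ} (π : Equiv.Perm (Fin n)) : ℕ := pkCount π⁻¹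

/-- The number of left peaks of `π⁻¹`. -/
def ilpk {n : ℕ} (π : Equiv.Perm (Fin n)) : ℕ := lpkCount π⁻¹
/-- The three-letter alphabet `{a, b, c}`. -/
inductive ABC : Type
  | a : ABC
  | b : ABC
  | c : ABC
  deriving DecidableEq, Repr

open ABC

/-- Words matching one of the alternatives `c`, `bc`, `a⁺b`, `a⁺c` of the regular
expression `(c ∪ bc ∪ a⁺b ∪ a⁺c)`. -/
def Atom (u : List ABC) : Prop :=
  u = [c] ∨ u = [b, c] ∨
    ∃ i : ℕ, 1 ≤ i ∧ (u = List.replicate i a ++ [b] ∨ u = List.replicate i a ++ [c])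

/-- Membership in `W_n`: words of length `n` of the form `a^i c u a c^j` (with `i, j ≥ 0`)
avoiding the subwords (i.e. blocks of consecutive letters) `bba`, `bbb`, `cba`, `cbb`. -/
def Wmem (n : ℕ) (w : List ABC) : Prop :=
  w.length = n ∧
  (∃ (i j : ℕ) (u : List ABC),
      w = List.replicate i a ++ [c] ++ u ++ [a] ++ List.replicate j c) ∧
  ¬ [b, b, a] <:+: w ∧ ¬ [b, b, b] <:+: w ∧ ¬ [c, b, a] <:+: w ∧ ¬ [c, b, b] <:+: w

/-- `i` is a left peak of `π` (1-based): `i ∈ [n-1]` and either `i` is a peak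
(`2 ≤ i ≤ n-1` and `π_{i-1} < π_i > π_{i+1}`) or `i = 1` and `π_1 > π_2`. -/
def IsLeftPeak {n : ℕ} (π : Equiv.Perm (Fin n)) (i : ℕ) : Prop :=
  1 ≤ i ∧ i ≤ n - 1 ∧
    ((2 ≤ i ∧ permWord π (i - 2) < permWord π (i - 1) ∧ permWord π i < permWord π (i - 1))
      ∨ (i = 1 ∧ permWord π 1 < permWord π 0))

/-- `i` is a right valley of `π` (1-based): `i ∈ {2,…,n}` and either `i` is a valley
(`i ≤ n-1` and `π_{i-1} > π_i < π_{i+1}`) or `i = n` and `π_{n-1} > π_n`. -/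
def IsRightValley {n : ℕ} (π : Equiv.Perm (Fin n)) (i : ℕ) : Prop :=
  2 ≤ i ∧ i ≤ n ∧
    ((i ≤ n - 1 ∧ permWord π (i - 1) < permWord π (i - 2) ∧ permWord π (i - 1) < permWord π i)
      ∨ (i = n ∧ permWord π (n - 1) < permWord π (n - 2)))

/-- The 1-based position of the value `p` in the one-line notation of `π`. -/
def posOf {n : ℕ} (π : Equiv.Perm (Fin n)) (p : ℕ) : ℕ := permWord π⁻¹ (p - 1)

/-- `w = φ(π)`, where `φ` is defined via the canonical decomposition `π = αβγ` (with
`α` increasing up to and including the left peak, `β` decreasing strictly between the left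
peak and the right valley, and `γ` increasing from the right valley on): the `p`-th letter
of `w` is `a`, `b`, or `c` according to whether the value `p` lies in `α`, `β`, or `γ`. -/
def IsPhi {n : ℕ} (π : Equiv.Perm (Fin n)) (w : List ABC) : Prop :=
  w.length = n ∧
  ∃ lp rv : ℕ, IsLeftPeak π lp ∧ IsRightValley π rv ∧
    ∀ p : ℕ, 1 ≤ p → p ≤ n →
      w[p - 1]? = some (if posOf π p ≤ lp then a else if posOf π p < rv then b else c)

namespace TZ
open ABC

variable {n : ℕ}

lemma permWord_eq (π : Equiv.Perm (Fin n)) {j : ℕ} (h : j < n) :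
    permWord π j = ((π ⟨j, h⟩ : Fin n) : ℕ) + 1 := by
  simp [permWord, h]

lemma permWord_pos (π : Equiv.Perm (Fin n)) {j : ℕ} (h : j < n) : 1 ≤ permWord π j := by
  rw [permWord_eq π h]; omega

lemma permWord_le (π : Equiv.Perm (Fin n)) {j : ℕ} (h : j < n) : permWord π j ≤ n := by
  rw [permWord_eq π h]; exact (π ⟨j, h⟩).2

lemma permWord_inj (π : Equiv.Perm (Fin n)) {j k : ℕ} (hj : j < n) (hk : k < n)
    (h : permWord π j = permWord π k) : j = k := by
  rw [permWord_eq π hj, permWord_eq π hk] at h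
  have := π.injective (Fin.ext (by omega : ((π ⟨j, hj⟩ : Fin n) : ℕ) = (π ⟨k, hk⟩ : Fin n)))
  simpa using congrArg Fin.val this

lemma permWord_ne (π : Equiv.Perm (Fin n)) {j k : ℕ} (hj : j < n) (hk : k < n)
    (h : j ≠ k) : permWord π j ≠ permWord π k := fun he => h (permWord_inj π hj hk he)

/-- Every descent belongs to a run of descents starting at the unique left peak. -/
lemma desc_run (π : Equiv.Perm (Fin n)) (lp : ℕ)
    (hset : ∀ i, (i ∈ Finset.Icc 1 (n-1) ∧
      ((2 ≤ i ∧ permWord π (i - 2) < permWord π (i - 1) ∧ permWord π i < permWord π (i - 1))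
        ∨ (i = 1 ∧ permWord π 1 < permWord π 0))) ↔ i = lp) :
    ∀ i, 1 ≤ i → i ≤ n - 1 → permWord π i < permWord π (i-1) →
      lp ≤ i ∧ ∀ k, lp ≤ k → k ≤ i → permWord π k < permWord π (k-1) := by
  intro i
  induction i using Nat.strong_induction_on with
  | _ i IH =>
    intro h1 h2 hdesc
    rcases Nat.lt_or_ge i 2 with hi2 | hi2
    · have hi1 : i = 1 := by omega
      subst hi1
      have h0 : (1:ℕ) = lp := (hset 1).mp ⟨Finset.mem_Icc.mpr ⟨le_refl _, h2⟩, Or.inr ⟨rfl, hdesc⟩⟩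
      refine ⟨h0.ge, fun k hk1 hk2 => ?_⟩
      have hk : k = 1 := by omega
      subst hk; exact hdesc
    · rcases Nat.lt_or_ge (permWord π (i-2)) (permWord π (i-1)) with hasc | hd
      · have h0 : i = lp := (hset i).mp ⟨Finset.mem_Icc.mpr ⟨by omega, h2⟩, Or.inl ⟨hi2, hasc, hdesc⟩⟩
        refine ⟨h0.ge, fun k hk1 hk2 => ?_⟩
        have hk : k = i := by omega
        subst hk; exact hdesc
      · have hne := permWord_ne π (by omega : i - 2 < n) (by omega : i - 1 < n) (by omega)
        have hstep : permWord π (i-1) < permWord π ((i-1)-1) := by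
          have he : (i-1)-1 = i-2 := by omega
          rw [he]; omega
        obtain ⟨hlp, hchain⟩ := IH (i-1) (by omega) (by omega) (by omega) hstep
        refine ⟨by omega, fun k hk1 hk2 => ?_⟩
        rcases Nat.lt_or_ge k i with hki | hki
        · exact hchain k hk1 (by omega)
        · have hk : k = i := by omega
          subst hk; exact hdesc
end TZ
namespace TZ
set_option linter.unusedSectionVars false
open ABC
variable {n : ℕ}

/-- From `lpkCount π = 1` together with a left peak and a right valley, the descent set
is exactly the interval `[lp, rv-1]`. -/
lemma desc_iff_of_lpk (π : Equiv.Perm (Fin n)) (lp rv : ℕ)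
    (hlpk : lpkCount π = 1) (hlp : IsLeftPeak π lp) (hrv : IsRightValley π rv) :
    lp ≤ rv - 1 ∧ ∀ i, 1 ≤ i → i ≤ n - 1 →
      (permWord π i < permWord π (i-1) ↔ lp ≤ i ∧ i ≤ rv - 1) := by
  obtain ⟨hlp1, hlp2, hlp3⟩ := hlp
  obtain ⟨hrv1, hrv2, hrv3⟩ := hrv
  unfold lpkCount at hlpk
  obtain ⟨x, hx⟩ := Finset.card_eq_one.mp hlpk
  have hmem : lp ∈ (Finset.Icc 1 (n-1)).filter (fun i =>
      (2 ≤ i ∧ permWord π (i - 2) < permWord π (i - 1) ∧ permWord π i < permWord π (i - 1))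
        ∨ (i = 1 ∧ permWord π 1 < permWord π 0)) :=
    Finset.mem_filter.mpr ⟨Finset.mem_Icc.mpr ⟨hlp1, hlp2⟩, hlp3⟩
  have hxlp : lp = x := by
    have hmem2 : lp ∈ ({x} : Finset ℕ) := hx ▸ hmem
    simpa using hmem2
  have hset : ∀ i, (i ∈ Finset.Icc 1 (n-1) ∧
      ((2 ≤ i ∧ permWord π (i - 2) < permWord π (i - 1) ∧ permWord π i < permWord π (i - 1))
        ∨ (i = 1 ∧ permWord π 1 < permWord π 0))) ↔ i = lp := by
    intro i
    constructor
    · intro ⟨h1, h2⟩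
      have hi : i ∈ ({x} : Finset ℕ) := hx ▸ Finset.mem_filter.mpr ⟨h1, h2⟩
      simp at hi; omega
    · rintro rfl
      exact ⟨Finset.mem_Icc.mpr ⟨hlp1, hlp2⟩, hlp3⟩
  have hrun := desc_run π lp hset
  -- rv - 1 is a descent
  have hdescrv : permWord π (rv-1) < permWord π ((rv-1)-1) := by
    rcases hrv3 with ⟨h1, h2, _⟩ | ⟨h1, h2⟩
    · have he : (rv-1)-1 = rv-2 := by omega
      rw [he]; exact h2
    · have he1 : rv - 1 = n - 1 := by omega
      have he2 : (rv-1)-1 = n-2 := by omega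
      rw [he2, he1]; exact h2
  have hrv1' : 1 ≤ rv - 1 := by omega
  have hrv2' : rv - 1 ≤ n - 1 := by omega
  obtain ⟨hxle, hchain⟩ := hrun (rv-1) hrv1' hrv2' hdescrv
  refine ⟨hxle, fun i h1 h2 => ⟨fun hdesc => ?_, fun ⟨ha, hb⟩ => hchain i ha hb⟩⟩
  obtain ⟨hle, hch⟩ := hrun i h1 h2 hdesc
  refine ⟨hle, ?_⟩
  by_contra hgt
  push_neg at hgt
  -- then rv ≤ i, so rv is a descent, contradicting right-valley
  have hrvd := hch rv (by omega) (by omega)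
  rcases hrv3 with ⟨hh1, hh2, hh3⟩ | ⟨hh1, hh2⟩
  · omega
  · omega

section Mono
variable (π : Equiv.Perm (Fin n)) (lp e : ℕ)
  (hlp1 : 1 ≤ lp) (hle : lp ≤ e) (he : e ≤ n - 1) (hn2 : 2 ≤ n)
  (Hdesc : ∀ i, 1 ≤ i → i ≤ n - 1 → (permWord π i < permWord π (i-1) ↔ lp ≤ i ∧ i ≤ e))

include hlp1 hle he hn2 Hdesc

lemma asc_of (i : ℕ) (h1 : 1 ≤ i) (h2 : i ≤ n - 1) (h3 : ¬(lp ≤ i ∧ i ≤ e)) :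
    permWord π (i-1) < permWord π i := by
  have hnd := (Hdesc i h1 h2).not.mpr h3
  have := permWord_ne π (by omega : i - 1 < n) (by omega : i < n) (by omega)
  omega

lemma mono_incA : ∀ j k, j < k → k ≤ lp - 1 → permWord π j < permWord π k := by
  intro j k hjk hk
  induction k with
  | zero => omega
  | succ m IH =>
    have hasc : permWord π m < permWord π (m+1) := by
      have := asc_of π lp e hlp1 hle he hn2 Hdesc (m+1) (by omega) (by omega) (by omega)
      simpa using this
    rcases Nat.lt_or_ge j m with hj | hj
    · exact lt_trans (IH (by omega) (by omega)) hasc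
    · have : j = m := by omega
      subst this; exact hasc

lemma mono_dec : ∀ j k, lp - 1 ≤ j → j < k → k ≤ e → permWord π k < permWord π j := by
  intro j k hj hjk hk
  induction k with
  | zero => omega
  | succ m IH =>
    have hdesc : permWord π (m+1) < permWord π m := by
      have := (Hdesc (m+1) (by omega) (by omega)).mpr ⟨by omega, by omega⟩
      simpa using this
    rcases Nat.lt_or_ge j m with hj' | hj'
    · exact lt_trans hdesc (IH (by omega) (by omega))
    · have : j = m := by omega
      subst this; exact hdesc

lemma mono_incC : ∀ j k, e ≤ j → j < k → k ≤ n - 1 → permWord π j < permWord π k := by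
  intro j k hj hjk hk
  induction k with
  | zero => omega
  | succ m IH =>
    have hasc : permWord π m < permWord π (m+1) := by
      have := asc_of π lp e hlp1 hle he hn2 Hdesc (m+1) (by omega) (by omega) (by omega)
      simpa using this
    rcases Nat.lt_or_ge j m with hj' | hj'
    · exact lt_trans (IH (by omega) (by omega)) hasc
    · have : j = m := by omega
      subst this; exact hasc

lemma min_at_e : ∀ j, lp - 1 ≤ j → j < n → j ≠ e → permWord π e < permWord π j := by
  intro j hj hjn hje
  rcases Nat.lt_or_ge j e with h | h
  · exact mono_dec π lp e hlp1 hle he hn2 Hdesc j e hj h (le_refl _)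
  · exact mono_incC π lp e hlp1 hle he hn2 Hdesc e j (le_refl _) (by omega) (by omega)

lemma max_at_lp : ∀ j, j ≤ e → j ≠ lp - 1 → permWord π j < permWord π (lp-1) := by
  intro j hj hjl
  rcases Nat.lt_or_ge j (lp-1) with h | h
  · exact mono_incA π lp e hlp1 hle he hn2 Hdesc j (lp-1) h (le_refl _)
  · exact mono_dec π lp e hlp1 hle he hn2 Hdesc (lp-1) j (le_refl _) (by omega) hj

end Mono
end TZ
namespace TZ
set_option linter.unusedSectionVars false
open ABC
variable {n : ℕ}

/-- If the descent set of `π` is exactly the interval `[lp, e]` (nonempty), then `π` has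
exactly one left peak, namely `lp`, and `e+1` is a right valley. -/
lemma lpk_of_interval (π : Equiv.Perm (Fin n)) (lp e : ℕ)
    (hlp1 : 1 ≤ lp) (hle : lp ≤ e) (he : e ≤ n - 1) (hn2 : 2 ≤ n)
    (Hdesc : ∀ i, 1 ≤ i → i ≤ n - 1 → (permWord π i < permWord π (i-1) ↔ lp ≤ i ∧ i ≤ e)) :
    lpkCount π = 1 ∧ IsLeftPeak π lp ∧ IsRightValley π (e+1) := by
  have hdesc_lp : permWord π lp < permWord π (lp-1) :=
    (Hdesc lp hlp1 (by omega)).mpr ⟨le_refl _, hle⟩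
  have hlpk : IsLeftPeak π lp := by
    refine ⟨hlp1, by omega, ?_⟩
    rcases Nat.lt_or_ge lp 2 with h2 | h2
    · have : lp = 1 := by omega
      subst this
      exact Or.inr ⟨rfl, by simpa using hdesc_lp⟩
    · refine Or.inl ⟨h2, ?_, hdesc_lp⟩
      have := asc_of π lp e hlp1 hle he hn2 Hdesc (lp-1) (by omega) (by omega) (by omega)
      have heq : lp - 1 - 1 = lp - 2 := by omega
      rw [heq] at this
      exact this
  have hdesc_e : permWord π e < permWord π (e-1) :=
    (Hdesc e (by omega) he).mpr ⟨hle, le_refl _⟩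
  have hrv : IsRightValley π (e+1) := by
    refine ⟨by omega, by omega, ?_⟩
    rcases Nat.lt_or_ge (e+1) n with hen | hen
    · refine Or.inl ⟨by omega, ?_, ?_⟩
      · have heq1 : e + 1 - 1 = e := by omega
        have heq2 : e + 1 - 2 = e - 1 := by omega
        rw [heq1, heq2]
        exact (Hdesc e (by omega) he).mpr ⟨hle, le_refl _⟩
      · have := asc_of π lp e hlp1 hle he hn2 Hdesc (e+1) (by omega) (by omega) (by omega)
        simpa using this
    · have hen' : e + 1 = n := by omega
      refine Or.inr ⟨hen', ?_⟩
      have heq1 : n - 1 = e := by omega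
      have heq2 : n - 2 = e - 1 := by omega
      rw [heq1, heq2]
      exact hdesc_e
  refine ⟨?_, hlpk, hrv⟩
  unfold lpkCount
  have hfe : (Finset.Icc 1 (n - 1)).filter (fun i =>
      (2 ≤ i ∧ permWord π (i - 2) < permWord π (i - 1) ∧ permWord π i < permWord π (i - 1))
        ∨ (i = 1 ∧ permWord π 1 < permWord π 0)) = {lp} := by
    apply Finset.eq_singleton_iff_unique_mem.mpr
    constructor
    · exact Finset.mem_filter.mpr ⟨Finset.mem_Icc.mpr ⟨hlp1, by omega⟩, hlpk.2.2⟩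
    · intro i hi
      obtain ⟨hi1, hi2⟩ := Finset.mem_filter.mp hi
      obtain ⟨ha, hb⟩ := Finset.mem_Icc.mp hi1
      rcases hi2 with ⟨h2, hasc, hdesc⟩ | ⟨h1, hdesc⟩
      · have hd := (Hdesc i ha hb).mp hdesc
        -- ascent at i-1 : ¬ descent at i-1
        have hnd : ¬ (permWord π (i-1) < permWord π (i-1-1)) := by
          have heq : i - 1 - 1 = i - 2 := by omega
          rw [heq]; omega
        have := (Hdesc (i-1) (by omega) (by omega)).not.mp hnd
        omega
      · subst h1
        have hd := (Hdesc 1 (le_refl _) (by omega)).mp (by simpa using hdesc)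
        omega
  rw [hfe]
  simp
end TZ
namespace TZ
open ABC

lemma assemble (w : List ABC) (p q : ℕ) (hpq : p < q) (hq : q < w.length)
    (h1 : ∀ k, k < p → w[k]? = some a) (h2 : w[p]? = some c) (h3 : w[q]? = some a)
    (h4 : ∀ k, q < k → k < w.length → w[k]? = some c) :
    ∃ (i j : ℕ) (u : List ABC),
      w = List.replicate i a ++ [c] ++ u ++ [a] ++ List.replicate j c := by
  have hp : p < w.length := by omega
  refine ⟨p, w.length - (q+1), (w.drop (p+1)).take (q - (p+1)), ?_⟩
  have htake : w.take p = List.replicate p a := by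
    apply List.ext_getElem
    · simp; omega
    · intro k hk1 hk2
      have hkp : k < p := by simpa using hk2
      have := h1 k hkp
      have hkw : k < w.length := by omega
      rw [List.getElem_take]
      have : w[k] = a := by
        have := h1 k hkp
        rw [List.getElem?_eq_getElem hkw] at this
        simpa using this
      simp [this]
  have hdropq : w.drop (q+1) = List.replicate (w.length - (q+1)) c := by
    apply List.ext_getElem
    · simp
    · intro k hk1 hk2
      have hk1' : k < w.length - (q + 1) := by simpa using hk1
      rw [List.getElem_drop]
      have hkw : q + 1 + k < w.length := by omega
      have : w[q+1+k] = c := by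
        have := h4 (q+1+k) (by omega) hkw
        rw [List.getElem?_eq_getElem hkw] at this
        simpa using this
      simp [this]
  have hwp : w[p] = c := by
    rw [List.getElem?_eq_getElem hp] at h2; simpa using h2
  have hwq : w[q] = a := by
    rw [List.getElem?_eq_getElem hq] at h3; simpa using h3
  set U := (w.drop (p+1)).take (q - (p+1)) with hUdef
  conv_lhs => rw [← List.take_append_drop p w]
  rw [List.drop_eq_getElem_cons hp, hwp]
  have hmid : w.drop (p+1) = U ++ (w.drop q) := by
    rw [hUdef]
    conv_lhs => rw [← List.take_append_drop (q - (p+1)) (w.drop (p+1))]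
    congr 1
    rw [List.drop_drop]
    congr 1
    omega
  rw [hmid, List.drop_eq_getElem_cons hq, hwq, htake, hdropq]
  simp
end TZ
namespace TZ
open ABC
variable {n : ℕ}

lemma posOf_permWord (π : Equiv.Perm (Fin n)) {j : ℕ} (h : j < n) :
    posOf π (permWord π j) = j + 1 := by
  rw [permWord_eq π h]
  unfold posOf
  have hlt : ((π ⟨j, h⟩ : Fin n) : ℕ) < n := (π ⟨j, h⟩).2
  rw [Nat.add_sub_cancel, permWord_eq π⁻¹ hlt]
  have : π⁻¹ ⟨((π ⟨j, h⟩ : Fin n) : ℕ), hlt⟩ = ⟨j, h⟩ := by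
    simp [Fin.eta]
  rw [this]

lemma permWord_surj (π : Equiv.Perm (Fin n)) {p : ℕ} (h1 : 1 ≤ p) (h2 : p ≤ n) :
    ∃ j, j < n ∧ permWord π j = p := by
  have hp : p - 1 < n := by omega
  refine ⟨(π⁻¹ ⟨p-1, hp⟩ : Fin n), (π⁻¹ ⟨p-1, hp⟩).2, ?_⟩
  rw [permWord_eq π (π⁻¹ ⟨p-1, hp⟩).2]
  have : π ⟨((π⁻¹ ⟨p-1, hp⟩ : Fin n) : ℕ), (π⁻¹ ⟨p-1, hp⟩).2⟩ = ⟨p-1, hp⟩ := by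
    simp [Fin.eta]
  rw [this]
  simp
  omega

lemma forward_dir (π : Equiv.Perm (Fin n)) (w : List ABC) (hw : w.length = n)
    (hlpk : lpkCount π = 1) (hφ : IsPhi π w) :
    ∃ (i j : ℕ) (u : List ABC),
      w = List.replicate i a ++ [c] ++ u ++ [a] ++ List.replicate j c := by
  obtain ⟨hlen, lp, rv, hlp, hrv, hφ'⟩ := hφ
  have hlp1 : 1 ≤ lp := hlp.1
  have hlp2 : lp ≤ n - 1 := hlp.2.1
  have hrv1 : 2 ≤ rv := hrv.1
  have hrv2 : rv ≤ n := hrv.2.1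
  have hn2 : 2 ≤ n := by omega
  obtain ⟨hle, Hdesc⟩ := desc_iff_of_lpk π lp rv hlpk hlp hrv
  set e := rv - 1 with hedef
  have he : e ≤ n - 1 := by omega
  have hen : e < n := by omega
  have hlpn : lp - 1 < n := by omega
  set p0 := permWord π e with hp0def
  set q0 := permWord π (lp-1) with hq0def
  have hp0pos : 1 ≤ p0 := permWord_pos π hen
  have hp0le : p0 ≤ n := permWord_le π hen
  have hq0le : q0 ≤ n := permWord_le π hlpn
  have hp0q0 : p0 < q0 := mono_dec π lp e hlp1 hle he hn2 Hdesc (lp-1) e (le_refl _) (by omega) (le_refl _)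
  -- letters below p0 are `a`
  have hA : ∀ k, k < p0 - 1 → w[k]? = some a := by
    intro k hk
    obtain ⟨j, hjn, hjp⟩ := permWord_surj π (by omega : 1 ≤ k+1) (by omega : k+1 ≤ n)
    have hjlp : j + 1 ≤ lp := by
      by_contra hcon
      push_neg at hcon
      have hje : j ≠ e := by
        intro hje; rw [hje] at hjp; omega
      have := min_at_e π lp e hlp1 hle he hn2 Hdesc j (by omega) hjn hje
      omega
    have hpos : posOf π (k+1) = j + 1 := by rw [← hjp, posOf_permWord π hjn]
    have := hφ' (k+1) (by omega) (by omega)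
    rw [hpos, if_pos hjlp] at this
    simpa using this
  -- letter at p0 is `c`
  have hc0 : w[p0 - 1]? = some c := by
    obtain ⟨j, hjn, hjp⟩ := permWord_surj π (by omega : 1 ≤ p0) hp0le
    have hje : j = e := permWord_inj π hjn hen (by rw [hjp])
    subst hje
    have hpos : posOf π p0 = e + 1 := by rw [← hjp, posOf_permWord π hjn]
    have := hφ' p0 (by omega) hp0le
    rw [hpos, if_neg (by omega), if_neg (by omega)] at this
    exact this
  -- letter at q0 is `a`
  have ha0 : w[q0 - 1]? = some a := by
    obtain ⟨j, hjn, hjp⟩ := permWord_surj π (by omega : 1 ≤ q0) hq0le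
    have hje : j = lp - 1 := permWord_inj π hjn hlpn (by rw [hjp])
    subst hje
    have hpos : posOf π q0 = (lp - 1) + 1 := by rw [← hjp, posOf_permWord π hjn]
    have := hφ' q0 (by omega) hq0le
    rw [hpos, if_pos (by omega)] at this
    exact this
  -- letters above q0 are `c`
  have hC : ∀ k, q0 - 1 < k → k < n → w[k]? = some c := by
    intro k hk1 hk2
    obtain ⟨j, hjn, hjp⟩ := permWord_surj π (by omega : 1 ≤ k+1) (by omega : k+1 ≤ n)
    have hje : e + 1 ≤ j := by
      by_contra hcon
      push_neg at hcon
      have hjlp : j ≠ lp - 1 := by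
        intro hjl; rw [hjl] at hjp; omega
      have := max_at_lp π lp e hlp1 hle he hn2 Hdesc j (by omega) hjlp
      omega
    have hpos : posOf π (k+1) = j + 1 := by rw [← hjp, posOf_permWord π hjn]
    have := hφ' (k+1) (by omega) (by omega)
    rw [hpos, if_neg (by omega), if_neg (by omega)] at this
    simpa using this
  exact assemble w (p0-1) (q0-1) (by omega) (by omega) hA hc0 ha0
    (by intro k h1 h2; exact hC k h1 (by omega))
end TZ
namespace TZ
open ABC

lemma backward_dir {n : ℕ} (hn : 1 ≤ n) (w : List ABC) (hw : w.length = n)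
    (i j : ℕ) (u : List ABC)
    (hform : w = List.replicate i a ++ [c] ++ u ++ [a] ++ List.replicate j c) :
    ∃ π : Equiv.Perm (Fin n), lpkCount π = 1 ∧ IsPhi π w := by
  classical
  have hlen : n = i + u.length + 2 + j := by
    have h := hw
    rw [hform] at h
    simp at h
    omega
  have hqn : i + 1 + u.length < n := by omega
  have hmn : i < n := by omega
  -- letter facts
  have fact_a1 : ∀ p, p < i → w[p]? = some ABC.a := by
    intro p hp
    rw [hform]
    rw [List.getElem?_append_left (by simp only [List.length_append, List.length_replicate, List.length_cons, List.length_nil]; omega)]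
    rw [List.getElem?_append_left (by simp only [List.length_append, List.length_replicate, List.length_cons, List.length_nil]; omega)]
    rw [List.getElem?_append_left (by simp only [List.length_append, List.length_replicate, List.length_cons, List.length_nil]; omega)]
    rw [List.getElem?_append_left (by simpa using hp)]
    simp [hp]
  have fact_c1 : w[i]? = some ABC.c := by
    rw [hform]
    rw [List.getElem?_append_left (by simp only [List.length_append, List.length_replicate, List.length_cons, List.length_nil]; omega)]
    rw [List.getElem?_append_left (by simp only [List.length_append, List.length_replicate, List.length_cons, List.length_nil]; omega)]
    rw [List.getElem?_append_left (by simp only [List.length_append, List.length_replicate, List.length_cons, List.length_nil]; omega)]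
    rw [List.getElem?_append_right (by simp)]
    simp
  have fact_aq : w[i + 1 + u.length]? = some ABC.a := by
    rw [hform]
    rw [List.getElem?_append_left (by simp only [List.length_append, List.length_replicate, List.length_cons, List.length_nil]; omega)]
    rw [List.getElem?_append_right (by simp only [List.length_append, List.length_replicate, List.length_cons, List.length_nil]; omega)]
    have e : i + 1 + u.length - (List.replicate i ABC.a ++ [ABC.c] ++ u).length = 0 := by
      simp only [List.length_append, List.length_replicate, List.length_cons, List.length_nil]; omega
    rw [e]
    rfl
  have fact_c2 : ∀ p, i + 1 + u.length < p → p < n → w[p]? = some ABC.c := by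
    intro p h1 h2
    rw [hform]
    rw [List.getElem?_append_right (by simp; omega)]
    rw [List.getElem?_replicate, if_pos (by simp; omega)]
  have hex : ∀ v, v < n → w[v]? = some ABC.a ∨ w[v]? = some ABC.b ∨ w[v]? = some ABC.c := by
    intro v hv
    have hvw : v < w.length := by omega
    rw [List.getElem?_eq_getElem hvw]
    cases h : w[v] <;> simp [h]
  -- the three letter classes
  set Aw : List ℕ := (List.range n).filter (fun v => decide (w[v]? = some ABC.a)) with hAw
  set Bw : List ℕ := (List.range n).filter (fun v => decide (w[v]? = some ABC.b)) with hBw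
  set Cw : List ℕ := (List.range n).filter (fun v => decide (w[v]? = some ABC.c)) with hCw
  set L : List ℕ := Aw ++ (Bw.reverse ++ Cw) with hL
  have hperm : L.Perm (List.range n) := by
    have h0 := List.filter_append_perm (fun v => decide (w[v]? = some ABC.a)) (List.range n)
    have h1 := List.filter_append_perm (fun v => decide (w[v]? = some ABC.b))
      ((List.range n).filter (fun v => !decide (w[v]? = some ABC.a)))
    have e1 : ((List.range n).filter (fun v => !decide (w[v]? = some ABC.a))).filter
        (fun v => decide (w[v]? = some ABC.b)) = Bw := by
      rw [List.filter_filter, hBw]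
      apply List.filter_congr
      intro v hv
      by_cases h : w[v]? = some ABC.b <;> simp [h]
    have e2 : ((List.range n).filter (fun v => !decide (w[v]? = some ABC.a))).filter
        (fun v => !decide (w[v]? = some ABC.b)) = Cw := by
      rw [List.filter_filter, hCw]
      apply List.filter_congr
      intro v hv
      have hvn : v < n := List.mem_range.mp hv
      rcases hex v hvn with h | h | h <;> simp [h]
    rw [e1, e2] at h1
    refine List.Perm.trans ?_ h0
    rw [hL, hAw]
    refine List.Perm.append_left _ ?_
    refine List.Perm.trans ?_ h1
    exact List.Perm.append_right _ (List.reverse_perm Bw)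
  have hlenL : L.length = n := by rw [hperm.length_eq, List.length_range]
  have hndL : L.Nodup := (List.Perm.nodup_iff hperm).mpr List.nodup_range
  have hmemL : ∀ x ∈ L, x < n := fun x hx => List.mem_range.mp ((hperm.mem_iff).mp hx)
  have hgetlt : ∀ k : Fin n, (k : ℕ) < L.length := fun k => by rw [hlenL]; exact k.2
  have hginj : Function.Injective
      (fun k : Fin n => (⟨L[(k:ℕ)]'(hgetlt k), hmemL _ (List.getElem_mem _)⟩ : Fin n)) := by
    intro k k' h
    have h2 : L[(k:ℕ)]'(hgetlt k) = L[(k':ℕ)]'(hgetlt k') := congrArg Fin.val h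
    exact Fin.ext ((List.Nodup.getElem_inj_iff hndL).mp h2)
  set π : Equiv.Perm (Fin n) := Equiv.ofBijective _ (Finite.injective_iff_bijective.mp hginj)
    with hπdef
  have hπ : ∀ k : Fin n, (π k : ℕ) = L[(k:ℕ)]'(hgetlt k) := fun k => rfl
  have hW : ∀ jx (h : jx < n), permWord π jx = L.getD jx 0 + 1 := by
    intro jx h
    rw [permWord_eq π h, List.getD_eq_getElem L 0 (by rw [hlenL]; exact h)]
    exact congrArg (· + 1) (hπ ⟨jx, h⟩)
  set nA := Aw.length with hnA
  set nB := Bw.length with hnB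
  set nC := Cw.length with hnC
  have hsum : nA + nB + nC = n := by
    have h := hlenL
    rw [hL] at h
    simp only [List.length_append, List.length_reverse] at h
    omega
  -- getD accessors
  have eA : ∀ k, k < nA → L.getD k 0 = Aw.getD k 0 := by
    intro k hk
    rw [List.getD_eq_getElem?_getD, List.getD_eq_getElem?_getD, hL,
        List.getElem?_append_left (by omega)]
  have eB : ∀ k, nA ≤ k → k < nA + nB → L.getD k 0 = Bw.getD (nB - 1 - (k - nA)) 0 := by
    intro k hk1 hk2
    rw [List.getD_eq_getElem?_getD, List.getD_eq_getElem?_getD, hL,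
        List.getElem?_append_right (by omega),
        List.getElem?_append_left (by rw [List.length_reverse]; omega),
        List.getElem?_reverse (by omega)]
  have eC : ∀ k, nA + nB ≤ k → k < n → L.getD k 0 = Cw.getD (k - nA - nB) 0 := by
    intro k hk1 hk2
    rw [List.getD_eq_getElem?_getD, List.getD_eq_getElem?_getD, hL,
        List.getElem?_append_right (by omega),
        List.getElem?_append_right (by rw [List.length_reverse]; omega)]
    have e : k - Aw.length - Bw.reverse.length = k - nA - nB := by
      rw [List.length_reverse]
    rw [e]
  -- membership of entries
  have memAw : ∀ k, k < nA → Aw.getD k 0 ∈ Aw := by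
    intro k hk
    rw [List.getD_eq_getElem Aw 0 (by omega)]
    exact List.getElem_mem _
  have memBw : ∀ k, k < nB → Bw.getD k 0 ∈ Bw := by
    intro k hk
    rw [List.getD_eq_getElem Bw 0 (by omega)]
    exact List.getElem_mem _
  have memCw : ∀ k, k < nC → Cw.getD k 0 ∈ Cw := by
    intro k hk
    rw [List.getD_eq_getElem Cw 0 (by omega)]
    exact List.getElem_mem _
  -- membership characterizations
  have memA_iff : ∀ v, v ∈ Aw ↔ v < n ∧ w[v]? = some ABC.a := by
    intro v
    rw [hAw]
    simp [List.mem_filter]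
  have memB_iff : ∀ v, v ∈ Bw ↔ v < n ∧ w[v]? = some ABC.b := by
    intro v
    rw [hBw]
    simp [List.mem_filter]
  have memC_iff : ∀ v, v ∈ Cw ↔ v < n ∧ w[v]? = some ABC.c := by
    intro v
    rw [hCw]
    simp [List.mem_filter]
  -- sortedness
  have pairA : Aw.Pairwise (· < ·) := by
    rw [hAw]; exact List.Pairwise.sublist List.filter_sublist List.pairwise_lt_range
  have pairB : Bw.Pairwise (· < ·) := by
    rw [hBw]; exact List.Pairwise.sublist List.filter_sublist List.pairwise_lt_range
  have pairC : Cw.Pairwise (· < ·) := by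
    rw [hCw]; exact List.Pairwise.sublist List.filter_sublist List.pairwise_lt_range
  have sortA : ∀ s t, s < t → t < nA → Aw.getD s 0 < Aw.getD t 0 := by
    intro s t hst ht
    rw [List.getD_eq_getElem Aw 0 (by omega), List.getD_eq_getElem Aw 0 (by omega)]
    exact List.pairwise_iff_getElem.mp pairA s t (by omega) (by omega) hst
  have sortB : ∀ s t, s < t → t < nB → Bw.getD s 0 < Bw.getD t 0 := by
    intro s t hst ht
    rw [List.getD_eq_getElem Bw 0 (by omega), List.getD_eq_getElem Bw 0 (by omega)]
    exact List.pairwise_iff_getElem.mp pairB s t (by omega) (by omega) hst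
  have sortC : ∀ s t, s < t → t < nC → Cw.getD s 0 < Cw.getD t 0 := by
    intro s t hst ht
    rw [List.getD_eq_getElem Cw 0 (by omega), List.getD_eq_getElem Cw 0 (by omega)]
    exact List.pairwise_iff_getElem.mp pairC s t (by omega) (by omega) hst
  -- value facts
  have hq_memA : (i + 1 + u.length) ∈ Aw := (memA_iff _).mpr ⟨hqn, fact_aq⟩
  have hm_memC : i ∈ Cw := (memC_iff _).mpr ⟨hmn, fact_c1⟩
  have hA_le : ∀ x ∈ Aw, x ≤ i + 1 + u.length := by
    intro x hx
    obtain ⟨hxn, hxa⟩ := (memA_iff x).mp hx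
    by_contra hcon
    push_neg at hcon
    rw [fact_c2 x hcon hxn] at hxa
    exact absurd hxa (by simp)
  have hC_ge : ∀ x ∈ Cw, i ≤ x := by
    intro x hx
    obtain ⟨hxn, hxc⟩ := (memC_iff x).mp hx
    by_contra hcon
    push_neg at hcon
    rw [fact_a1 x (by omega)] at hxc
    exact absurd hxc (by simp)
  have hB_bound : ∀ x ∈ Bw, i < x ∧ x < i + 1 + u.length := by
    intro x hx
    obtain ⟨hxn, hxb⟩ := (memB_iff x).mp hx
    constructor
    · rcases Nat.lt_trichotomy x i with h | h | h
      · rw [fact_a1 x h] at hxb; exact absurd hxb (by simp)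
      · subst h; rw [fact_c1] at hxb; exact absurd hxb (by simp)
      · exact h
    · rcases Nat.lt_trichotomy x (i + 1 + u.length) with h | h | h
      · exact h
      · rw [h, fact_aq] at hxb; exact absurd hxb (by simp)
      · rw [fact_c2 x h hxn] at hxb; exact absurd hxb (by simp)
  have hnA1 : 1 ≤ nA := by
    have := List.length_pos_iff.mpr (List.ne_nil_of_mem hq_memA)
    omega
  have hnC1 : 1 ≤ nC := by
    have := List.length_pos_iff.mpr (List.ne_nil_of_mem hm_memC)
    omega
  have lastA : Aw.getD (nA - 1) 0 = i + 1 + u.length := by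
    obtain ⟨t, ht, hte⟩ := List.mem_iff_getElem.mp hq_memA
    have htn : t < nA := by omega
    have h1 : Aw.getD t 0 = i + 1 + u.length := by
      rw [List.getD_eq_getElem Aw 0 ht]; exact hte
    rcases Nat.lt_or_ge t (nA - 1) with h | h
    · exfalso
      have hlt := sortA t (nA - 1) h (by omega)
      have hmem := memAw (nA - 1) (by omega)
      have := hA_le _ hmem
      omega
    · have he : t = nA - 1 := by omega
      rw [← he]; exact h1
  have headC : Cw.getD 0 0 = i := by
    obtain ⟨t, ht, hte⟩ := List.mem_iff_getElem.mp hm_memC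
    have htn : t < nC := by omega
    have h1 : Cw.getD t 0 = i := by
      rw [List.getD_eq_getElem Cw 0 ht]; exact hte
    rcases Nat.eq_or_lt_of_le (Nat.zero_le t) with h | h
    · have he : t = 0 := h.symm
      rw [he] at h1; exact h1
    · exfalso
      have hlt := sortC 0 t h htn
      have hmem := memCw 0 (by omega)
      have := hC_ge _ hmem
      omega
  have hn2 : 2 ≤ n := by omega
  have hnABn : nA + nB ≤ n - 1 := by omega
  have Hdesc : ∀ t, 1 ≤ t → t ≤ n - 1 →
      (permWord π t < permWord π (t-1) ↔ nA ≤ t ∧ t ≤ nA + nB) := by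
    intro t h1 h2
    rw [hW t (by omega), hW (t-1) (by omega)]
    rcases Nat.lt_or_ge t nA with hc1 | hc1
    · -- ascent within A
      have hcmp : L.getD (t-1) 0 < L.getD t 0 := by
        rw [eA (t-1) (by omega), eA t hc1]
        exact sortA (t-1) t (by omega) hc1
      omega
    rcases Nat.eq_or_lt_of_le hc1 with hc2 | hc2
    · -- t = nA : descent at the peak
      have hL1 : L.getD (t-1) 0 = i + 1 + u.length := by
        rw [eA (t-1) (by omega)]
        rw [show t - 1 = nA - 1 from by omega]
        exact lastA
      have hcmp : L.getD t 0 < i + 1 + u.length := by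
        rcases Nat.eq_or_lt_of_le (Nat.zero_le nB) with hb0 | hb0
        · -- B empty : t = nA = nA + nB, next entry is head of C
          have := eC t (by omega) (by omega)
          rw [this, show t - nA - nB = 0 from by omega, headC]
          omega
        · have := eB t (by omega) (by omega)
          rw [this]
          have hmem := memBw (nB - 1 - (t - nA)) (by omega)
          exact (hB_bound _ hmem).2
      omega
    rcases Nat.lt_or_ge t (nA + nB) with hc3 | hc3
    · -- descent within B
      have hcmp : L.getD t 0 < L.getD (t-1) 0 := by
        rw [eB t (by omega) (by omega), eB (t-1) (by omega) (by omega)]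
        exact sortB _ _ (by omega) (by omega)
      omega
    rcases Nat.eq_or_lt_of_le hc3 with hc4 | hc4
    · -- t = nA + nB with nB > 0 : descent into head of C
      have hnB1 : 1 ≤ nB := by omega
      have hL1 : L.getD t 0 = i := by
        rw [eC t (by omega) (by omega), show t - nA - nB = 0 from by omega, headC]
      have hcmp : i < L.getD (t-1) 0 := by
        rw [eB (t-1) (by omega) (by omega)]
        have hmem := memBw (nB - 1 - (t - 1 - nA)) (by omega)
        exact (hB_bound _ hmem).1
      omega
    · -- ascent within C
      have hcmp : L.getD (t-1) 0 < L.getD t 0 := by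
        rw [eC (t-1) (by omega) (by omega), eC t (by omega) (by omega)]
        exact sortC _ _ (by omega) (by omega)
      omega
  obtain ⟨hlpk1, hLP, hRV⟩ := lpk_of_interval π nA (nA + nB) hnA1 (by omega) hnABn hn2 Hdesc
  refine ⟨π, hlpk1, hw, nA, nA + nB + 1, hLP, hRV, ?_⟩
  intro p hp1 hp2
  have hv : p - 1 < n := by omega
  set k : Fin n := π⁻¹ ⟨p-1, hv⟩ with hkdef
  have hπk : (π k : ℕ) = p - 1 := by rw [hkdef]; simp
  have hLk : L.getD (k : ℕ) 0 = p - 1 := by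
    rw [List.getD_eq_getElem L 0 (hgetlt k), ← hπ k]
    exact hπk
  have hpos : posOf π p = (k : ℕ) + 1 := by
    unfold posOf
    rw [permWord_eq π⁻¹ hv]
  have regA : (k : ℕ) < nA → w[p-1]? = some ABC.a := by
    intro hr
    have h2 : (p - 1) ∈ Aw := by
      rw [← hLk, eA _ hr]
      exact memAw _ hr
    exact ((memA_iff _).mp h2).2
  have regB : nA ≤ (k : ℕ) → (k : ℕ) < nA + nB → w[p-1]? = some ABC.b := by
    intro hr1 hr2
    have h2 : (p - 1) ∈ Bw := by
      rw [← hLk, eB _ hr1 hr2]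
      exact memBw _ (by omega)
    exact ((memB_iff _).mp h2).2
  have regC : nA + nB ≤ (k : ℕ) → w[p-1]? = some ABC.c := by
    intro hr
    have h2 : (p - 1) ∈ Cw := by
      rw [← hLk, eC _ hr k.2]
      exact memCw _ (by omega)
    exact ((memC_iff _).mp h2).2
  rw [hpos]
  rcases Nat.lt_or_ge (k : ℕ) nA with hr | hr
  · rw [if_pos (by omega)]
    exact regA hr
  rcases Nat.lt_or_ge (k : ℕ) (nA + nB) with hr2 | hr2
  · rw [if_neg (by omega), if_pos (by omega)]
    exact regB hr hr2
  · rw [if_neg (by omega), if_neg (by omega)]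
    exact regC hr2
end TZ
/-- **Lemma 9 (Troyka–Zhuang).** A word `w` of length `n` lies in `φ(N_n)` (where `N_n` is
the set of permutations of `S_n` with exactly one left peak) if and only if it has the form
`w = a^i c u a c^j` with `i, j ≥ 0`. -/
theorem stmt12 (n : ℕ) (hn : 1 ≤ n) (w : List ABC) (hw : w.length = n) :
    (∃ π : Equiv.Perm (Fin n), lpkCount π = 1 ∧ IsPhi π w) ↔
      ∃ (i j : ℕ) (u : List ABC),
        w = List.replicate i a ++ [c] ++ u ++ [a] ++ List.replicate j c := by
  constructor
  · rintro ⟨π, h1, h2⟩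
    exact TZ.forward_dir π w hw h1 h2
  · rintro ⟨i, j, u, hform⟩
    exact TZ.backward_dir hn w hw i j u hform
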